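/- arXiv:2602.23154 — 5 statements merged into one kernel-verified Lean document; each statement's English description precedes it below -/
import Mathlib

section
/- Let (X,d) be a finite metric space and let k be a natural number with 1 ≤ k < |X|. Define H_{X,k} := max over subsets A ⊆ X with |A| ≤ k of the Hausdorff distance d_H(X \ A, X). Then there exist a point x ∈ X and a subset A ⊆ X with x ∈ A and |A| = k such that d(x,y) ≤ d(x,z) for every y ∈ A \ {x} and every z ∈ X \ A (that is, A consists of x together with k−1 nearest neighbors of x), and d_H(X \ A, X) = H_{X,k}. -/
open Metric

/-- structural part of Lemma 5.4, LEM:HHstructure.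
Let `(X,d)` be a finite metric space and `1 ≤ k < |X|`, and let
`H_{X,k} := max_{B ⊆ X, |B| ≤ k} d_H(X \ B, X)`. Then there are `x ∈ X` and `A ⊆ X` with
`x ∈ A`, `|A| = k`, such that `d(x,y) ≤ d(x,z)` for all `y ∈ A \ {x}` and `z ∈ X \ A`
(`A` consists of `x` together with `k−1` nearest neighbors of `x`), and
`d_H(X \ A, X) = H_{X,k}`. -/
theorem stmt_2 {X : Type*} [MetricSpace X] [Fintype X] (k : ℕ) (hk1 : 1 ≤ k)
    (hk2 : k < Fintype.card X) :
    ∃ (x : X) (A : Finset X), x ∈ A ∧ A.card = k ∧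
      (∀ y ∈ A, y ≠ x → ∀ z : X, z ∉ A → dist x y ≤ dist x z) ∧
      Metric.hausdorffDist ((↑A : Set X)ᶜ) Set.univ =
        sSup { d : ℝ | ∃ B : Finset X, B.card ≤ k ∧
          d = Metric.hausdorffDist ((↑B : Set X)ᶜ) Set.univ } := by
  classical
  have hXne : Nonempty X := by
    rw [← Fintype.card_pos_iff]; omega
  set S : Set ℝ := { d : ℝ | ∃ B : Finset X, B.card ≤ k ∧
      d = Metric.hausdorffDist ((↑B : Set X)ᶜ) Set.univ } with hSdef
  have hfin : S.Finite := by
    have hsub : S ⊆ (fun B : Finset X =>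
        Metric.hausdorffDist ((↑B : Set X)ᶜ) Set.univ) '' Set.univ := by
      rintro d ⟨B, _, rfl⟩; exact ⟨B, trivial, rfl⟩
    exact (Set.finite_univ.image _).subset hsub
  have hSne : S.Nonempty := ⟨_, ∅, by simp, rfl⟩
  -- nonemptiness of complements
  have hcompl : ∀ B : Finset X, B.card ≤ k → ((↑B : Set X)ᶜ).Nonempty := by
    intro B hB
    have : B ≠ Finset.univ := by
      intro h; rw [h, Finset.card_univ] at hB; omega
    obtain ⟨z, hz⟩ : ∃ z, z ∉ B := by
      by_contra h; push_neg at h; exact this (Finset.eq_univ_iff_forall.mpr h)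
    exact ⟨z, by simpa using hz⟩
  have hedist : ∀ B : Finset X, B.card ≤ k →
      EMetric.hausdorffEdist ((↑B : Set X)ᶜ) (Set.univ : Set X) ≠ ⊤ := by
    intro B hB
    exact Metric.hausdorffEdist_ne_top_of_nonempty_of_bounded (hcompl B hB)
      Set.univ_nonempty (Set.toFinite _).isBounded (Set.toFinite _).isBounded
  -- upper bound for all admissible B
  have hub : ∀ B : Finset X, B.card ≤ k →
      Metric.hausdorffDist ((↑B : Set X)ᶜ) Set.univ ≤ sSup S := by
    intro B hB
    exact le_csSup hfin.bddAbove ⟨B, hB, rfl⟩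
  -- the sup is attained
  obtain ⟨B, hBk, hBeq⟩ := hSne.csSup_mem hfin
  -- pick x maximizing infDist to Bᶜ
  obtain ⟨x, -, hxmax⟩ := Finset.exists_max_image Finset.univ
    (fun p : X => Metric.infDist p ((↑B : Set X)ᶜ)) Finset.univ_nonempty
  -- hausdorffDist Bᶜ univ ≤ infDist x Bᶜ
  have hBle : Metric.hausdorffDist ((↑B : Set X)ᶜ) Set.univ ≤
      Metric.infDist x ((↑B : Set X)ᶜ) := by
    apply Metric.hausdorffDist_le_of_infDist Metric.infDist_nonneg
    · intro p hp
      rw [Metric.infDist_zero_of_mem (Set.mem_univ p)]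
      exact Metric.infDist_nonneg
    · intro p _
      exact hxmax p (Finset.mem_univ p)
  -- choose A: x plus k-1 nearest neighbors, via minimizing the sum of distances
  have hexA : ∃ A : Finset X, x ∈ A ∧ A.card = k := by
    obtain ⟨A, hA1, -, hA3⟩ := Finset.exists_subsuperset_card_eq (t := Finset.univ)
      (s := {x}) (n := k - 1 + ({x} : Finset X).card) (Finset.subset_univ _) (by simp) (by simp; omega)
    refine ⟨A, hA1 (Finset.mem_singleton_self x), ?_⟩
    rw [hA3, Finset.card_singleton]; omega
  obtain ⟨A0, hA0⟩ := hexA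
  obtain ⟨A, hAmem, hAmin⟩ := Finset.exists_min_image
    ((Finset.univ : Finset (Finset X)).filter (fun A => x ∈ A ∧ A.card = k))
    (fun A => ∑ y ∈ A, dist x y)
    ⟨A0, by simpa using hA0⟩
  simp only [Finset.mem_filter, Finset.mem_univ, true_and] at hAmem
  obtain ⟨hxA, hAcard⟩ := hAmem
  -- nearest neighbor property by exchange argument
  have hNN : ∀ y ∈ A, y ≠ x → ∀ z : X, z ∉ A → dist x y ≤ dist x z := by
    intro y hy hyx z hz
    by_contra hlt
    push_neg at hlt
    have hzx : z ≠ x := fun h => hz (h ▸ hxA)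
    set A' : Finset X := insert z (A.erase y) with hA'
    have hzA' : z ∉ A.erase y := fun h => hz (Finset.mem_of_mem_erase h)
    have hxA' : x ∈ A' := Finset.mem_insert_of_mem (Finset.mem_erase.mpr ⟨hyx.symm, hxA⟩)
    have hA'card : A'.card = k := by
      rw [hA', Finset.card_insert_of_notMem hzA', Finset.card_erase_of_mem hy, hAcard]
      omega
    have hsum : ∑ w ∈ A', dist x w < ∑ w ∈ A, dist x w := by
      rw [hA', Finset.sum_insert hzA']
      have : ∑ w ∈ A.erase y, dist x w = (∑ w ∈ A, dist x w) - dist x y := by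
        rw [Finset.sum_erase_eq_sub hy]
      rw [this]; linarith
    have := hAmin A' (by simp [hxA', hA'card])
    linarith
  refine ⟨x, A, hxA, hAcard, hNN, ?_⟩
  -- final equality
  have hAleS : Metric.hausdorffDist ((↑A : Set X)ᶜ) Set.univ ≤ sSup S :=
    hub A (le_of_eq hAcard)
  -- lower bound: infDist x Bᶜ ≤ infDist x Aᶜ
  obtain ⟨z, hzmem, hzeq⟩ := (Set.toFinite ((↑A : Set X)ᶜ)).isCompact.exists_infDist_eq_dist
    (hcompl A (le_of_eq hAcard)) x
  have hzA : z ∉ A := by simpa using hzmem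
  have hBinf : Metric.infDist x ((↑B : Set X)ᶜ) ≤ Metric.infDist x ((↑A : Set X)ᶜ) := by
    -- find w ∈ insert z A with w ∉ B
    have hcard' : B.card < (insert z A).card := by
      rw [Finset.card_insert_of_notMem hzA, hAcard]; omega
    have : ¬ insert z A ⊆ B := fun h => absurd (Finset.card_le_card h) (by omega)
    obtain ⟨w, hwmem, hwB⟩ := Finset.not_subset.mp this
    have hwd : dist x w ≤ dist x z := by
      rcases Finset.mem_insert.mp hwmem with h | h
      · exact le_of_eq (by rw [h])
      · rcases eq_or_ne w x with rfl | hwx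
        · simpa using dist_nonneg
        · exact hNN w h hwx z hzA
    calc Metric.infDist x ((↑B : Set X)ᶜ) ≤ dist x w :=
          Metric.infDist_le_dist_of_mem (by simpa using hwB)
      _ ≤ dist x z := hwd
      _ = Metric.infDist x ((↑A : Set X)ᶜ) := hzeq.symm
  have hAge : sSup S ≤ Metric.hausdorffDist ((↑A : Set X)ᶜ) Set.univ := by
    calc sSup S = Metric.hausdorffDist ((↑B : Set X)ᶜ) Set.univ := hBeq
      _ ≤ Metric.infDist x ((↑B : Set X)ᶜ) := hBle
      _ ≤ Metric.infDist x ((↑A : Set X)ᶜ) := hBinf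
      _ ≤ Metric.hausdorffDist (Set.univ : Set X) ((↑A : Set X)ᶜ) :=
          Metric.infDist_le_hausdorffDist_of_mem (Set.mem_univ x)
            (by rw [EMetric.hausdorffEdist_comm]; exact hedist A (le_of_eq hAcard))
      _ = Metric.hausdorffDist ((↑A : Set X)ᶜ) Set.univ := Metric.hausdorffDist_comm
  exact le_antisymm hAleS hAge
end

section
/- Let (X,d) be a finite metric space and let k be a natural number with 1 ≤ k < |X|. For x ∈ X define r_k(x) := min { r ≥ 0 : |{ y ∈ X : y ≠ x and d(x,y) ≤ r }| ≥ k }. Suppose A ⊆ X with |A| = k attains the maximum of d_H(X \ B, X) over all subsets B ⊆ X with |B| ≤ k. Then there exists a ∈ A such that d_H(X \ A, X) = r_k(a). -/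
/-- converse direction in the proof of Lemma 5.4, LEM:HHstructure.
Let `(X,d)` be a finite metric space, `1 ≤ k < |X|`, and for `x ∈ X` let
`r_k(x) := min { r ≥ 0 : #{ y ≠ x : d(x,y) ≤ r } ≥ k }`. If `A ⊆ X` with `|A| = k`
attains the maximum of `d_H(X \ B, X)` over all `B ⊆ X` with `|B| ≤ k`, then there is
`a ∈ A` with `d_H(X \ A, X) = r_k(a)`. -/
theorem stmt_3 {X : Type*} [MetricSpace X] [Fintype X] (k : ℕ) (hk1 : 1 ≤ k)
    (hk2 : k < Fintype.card X) (A : Finset X) (hcard : A.card = k)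
    (hmax : ∀ B : Finset X, B.card ≤ k →
      Metric.hausdorffDist ((↑B : Set X)ᶜ) Set.univ ≤
        Metric.hausdorffDist ((↑A : Set X)ᶜ) Set.univ) :
    ∃ a ∈ A, Metric.hausdorffDist ((↑A : Set X)ᶜ) Set.univ =
      sInf { r : ℝ | 0 ≤ r ∧ k ≤ {y : X | y ≠ a ∧ dist a y ≤ r}.ncard } := by
  classical
  have hAne : A.Nonempty := Finset.card_pos.mp (by omega)
  -- complements of small finsets are nonempty
  have hcne : ∀ B : Finset X, B.card ≤ k → ((↑B : Set X)ᶜ).Nonempty := by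
    intro B hB
    rw [Set.nonempty_compl]
    intro h
    rw [Finset.coe_eq_univ] at h
    subst h
    simp [Finset.card_univ] at hB
    omega
  have hAc := hcne A (le_of_eq hcard)
  -- finiteness of the hausdorff edist
  have hedist : ∀ s t : Set X, s.Nonempty → t.Nonempty →
      EMetric.hausdorffEdist s t ≠ ⊤ := fun s t hs ht =>
    Metric.hausdorffEdist_ne_top_of_nonempty_of_bounded hs ht
      (Set.toFinite s).isBounded (Set.toFinite t).isBounded
  -- infDist is attained
  have hattain : ∀ (x : X) (s : Set X), s.Nonempty →
      ∃ y ∈ s, Metric.infDist x s = dist x y := fun x s hs =>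
    (Set.toFinite s).isCompact.exists_infDist_eq_dist hs x
  -- pick a maximizing infDist to Aᶜ
  obtain ⟨a, haA, hamax⟩ := A.exists_max_image
    (fun x => Metric.infDist x ((↑A : Set X)ᶜ)) hAne
  refine ⟨a, haA, ?_⟩
  set dH := Metric.hausdorffDist ((↑A : Set X)ᶜ) Set.univ with hdH
  -- ncard as Finset card
  have hncard : ∀ (r : ℝ), {y : X | y ≠ a ∧ dist a y ≤ r}.ncard =
      (Finset.univ.filter (fun y => y ≠ a ∧ dist a y ≤ r)).card := by
    intro r
    rw [← Set.ncard_coe_finset]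
    congr 1
    ext y
    simp
  -- dH = infDist a Aᶜ
  have hd1 : Metric.infDist a ((↑A : Set X)ᶜ) ≤ dH := by
    rw [hdH, Metric.hausdorffDist_comm]
    exact Metric.infDist_le_hausdorffDist_of_mem (Set.mem_univ a)
      (hedist _ _ ⟨a, Set.mem_univ a⟩ hAc)
  have hd2 : dH ≤ Metric.infDist a ((↑A : Set X)ᶜ) := by
    apply Metric.hausdorffDist_le_of_mem_dist Metric.infDist_nonneg
    · intro x hx
      exact ⟨x, Set.mem_univ x, by simpa using (Metric.infDist_nonneg : (0:ℝ) ≤ Metric.infDist a ((↑A : Set X)ᶜ))⟩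
    · intro x _
      by_cases hxA : x ∈ A
      · obtain ⟨y, hy, hyd⟩ := hattain x ((↑A : Set X)ᶜ) hAc
        exact ⟨y, hy, by rw [← hyd]; exact hamax x hxA⟩
      · exact ⟨x, by simpa using hxA, by simpa using (Metric.infDist_nonneg : (0:ℝ) ≤ Metric.infDist a ((↑A : Set X)ᶜ))⟩
  have hD : dH = Metric.infDist a ((↑A : Set X)ᶜ) := le_antisymm hd2 hd1
  -- S is nonempty
  have hSne : { r : ℝ | 0 ≤ r ∧ k ≤ {y : X | y ≠ a ∧ dist a y ≤ r}.ncard }.Nonempty := by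
    refine ⟨Metric.diam (Set.univ : Set X), Metric.diam_nonneg, ?_⟩
    rw [hncard]
    have : (Finset.univ.filter (fun y => y ≠ a ∧ dist a y ≤ Metric.diam (Set.univ : Set X)))
        = Finset.univ.erase a := by
      ext y
      simp only [Finset.mem_filter, Finset.mem_univ, true_and, Finset.mem_erase, and_true]
      constructor
      · exact fun h => h.1
      · exact fun h => ⟨h, Metric.dist_le_diam_of_mem Set.finite_univ.isBounded
          (Set.mem_univ _) (Set.mem_univ _)⟩
    rw [this, Finset.card_erase_of_mem (Finset.mem_univ a), Finset.card_univ]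
    omega
  apply le_antisymm
  · -- dH ≤ sInf S
    apply le_csInf hSne
    intro r hr
    obtain ⟨hr0, hrk⟩ := hr
    rw [hncard] at hrk
    set M := Finset.univ.filter (fun y => y ≠ a ∧ dist a y ≤ r) with hM
    have : ¬ M ⊆ A := by
      intro hsub
      have hsub' : M ⊆ A.erase a := by
        intro y hy
        rw [Finset.mem_erase]
        exact ⟨(Finset.mem_filter.mp hy).2.1, hsub hy⟩
      have := Finset.card_le_card hsub'
      rw [Finset.card_erase_of_mem haA, hcard] at this
      omega
    obtain ⟨y, hyM, hyA⟩ := Finset.not_subset.mp this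
    obtain ⟨hya, hyd⟩ := (Finset.mem_filter.mp hyM).2
    calc dH = Metric.infDist a ((↑A : Set X)ᶜ) := hD
      _ ≤ dist a y := Metric.infDist_le_dist_of_mem (by simpa using hyA)
      _ ≤ r := hyd
  · -- sInf S ≤ dH
    apply csInf_le ⟨0, fun r hr => hr.1⟩
    refine ⟨Metric.hausdorffDist_nonneg, ?_⟩
    rw [hncard]
    by_contra hlt
    push_neg at hlt
    set M := Finset.univ.filter (fun y => y ≠ a ∧ dist a y ≤ dH) with hM
    have haM : a ∉ M := by simp [hM]
    set B := insert a M with hB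
    have hBcard : B.card ≤ k := by
      rw [hB, Finset.card_insert_of_notMem haM]
      omega
    have hBc := hcne B hBcard
    obtain ⟨y, hyBc, hyd⟩ := hattain a ((↑B : Set X)ᶜ) hBc
    have hyB : y ∉ B := by simpa using hyBc
    have hya : y ≠ a := by
      intro h; exact hyB (by simp [hB, h])
    have hyM : y ∉ M := fun h => hyB (by simp [hB, h])
    have hygt : ¬ dist a y ≤ dH := by
      intro h
      exact hyM (by simp [hM, hya, h])
    apply hygt
    calc dist a y = Metric.infDist a ((↑B : Set X)ᶜ) := hyd.symm
      _ ≤ Metric.hausdorffDist ((↑B : Set X)ᶜ) Set.univ := by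
          rw [Metric.hausdorffDist_comm]
          exact Metric.infDist_le_hausdorffDist_of_mem (Set.mem_univ a)
            (hedist _ _ ⟨a, Set.mem_univ a⟩ hBc)
      _ ≤ dH := hmax B hBcard
end

section
/- Let V be a finite linearly ordered set, K a finite abstract simplicial complex on V, and c a 1-cycle of K with real coefficients. If C ⊆ K^(1) is an inclusion-minimal homological edge cut for c (that is, C is a homological edge cut for c but no proper subset of C is), then there exists a 1-cochain φ : K^(1) → ℝ with support exactly C, satisfying the cocycle condition φ(∂_2 σ) = 0 for every 2-simplex σ ∈ K^(2), and φ(c) = 1. -/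
open Finset

variable {V : Type*} [Fintype V] [LinearOrder V]

/-- `K` is a finite abstract simplicial complex on `V`: a collection of nonempty finite
subsets of `V` closed under passing to nonempty subsets. -/
def IsComplex (K : Finset (Finset V)) : Prop :=
  (∀ σ ∈ K, σ.Nonempty) ∧ ∀ σ ∈ K, ∀ τ ⊆ σ, τ.Nonempty → τ ∈ K

/-- The set `K^(p)` of `p`-simplices of `K` (members of cardinality `p+1`). -/
def pSimplices (K : Finset (Finset V)) (p : ℕ) : Finset (Finset V) :=
  K.filter fun σ => σ.card = p + 1

/-- The indicator `p`-chain of a `p`-simplex `σ`. -/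
def ind (F : Type*) [Zero F] [One F] (σ : Finset V) : Finset V → F :=
  fun τ => if τ = σ then 1 else 0

/-- The simplicial boundary operator on chains (with respect to the linear order on `V`):
the indicator of a simplex `{v_0 < … < v_p}` is sent to
`Σ_{i} (−1)^i · indicator of {v_0,…,v_p} \ {v_i}`.  Equivalently, the coefficient of a
chain's boundary at a face `σ` is `Σ_{v ∉ σ} (−1)^{#{u ∈ σ : u < v}} · c (σ ∪ {v})`. -/
def bdry {F : Type*} [CommRing F] (c : Finset V → F) : Finset V → F :=
  fun σ => ∑ v ∈ σᶜ, (-1 : F) ^ (σ.filter fun u => u < v).card * c (insert v σ)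

/-- Evaluation of a cochain `φ` on a chain `c`, extended bilinearly. -/
def evalC {F : Type*} [CommRing F] (φ c : Finset V → F) : F :=
  ∑ σ : Finset V, φ σ * c σ

/-- `c` is a `p`-chain of `K`: it is supported on the `p`-simplices of `K`. -/
def suppIn {F : Type*} [Zero F] (K : Finset (Finset V)) (p : ℕ) (c : Finset V → F) : Prop :=
  ∀ σ : Finset V, c σ ≠ 0 → σ ∈ K ∧ σ.card = p + 1

/-- `c` is a `p`-cycle of `K`. -/
def IsCycleOf {F : Type*} [CommRing F] (K : Finset (Finset V)) (p : ℕ)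
    (c : Finset V → F) : Prop :=
  suppIn K p c ∧ bdry c = 0

/-- Two `p`-chains are homologous in `K` if their difference is the boundary of a
`(p+1)`-chain of `K`. -/
def HomologousIn {F : Type*} [CommRing F] (K : Finset (Finset V)) (p : ℕ)
    (c₁ c₂ : Finset V → F) : Prop :=
  ∃ b : Finset V → F, suppIn K (p + 1) b ∧ c₁ - c₂ = bdry b

/-- `K − C`: the subcomplex of all simplices of `K` having no subset belonging to `C`. -/
def deleteSimps (K C : Finset (Finset V)) : Finset (Finset V) :=
  K.filter fun σ => ∀ τ ∈ C, ¬ τ ⊆ σ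

/-- `C` is a homological cut for the 1-cycle `c`: no 1-cycle of `K − C` is homologous
to `c` in `K`. -/
def IsHomCut {F : Type*} [CommRing F] (K C : Finset (Finset V)) (c : Finset V → F) : Prop :=
  ¬ ∃ z : Finset V → F, IsCycleOf (deleteSimps K C) 1 z ∧ HomologousIn K 1 z c

noncomputable section AuxStmt7

/-- `bdry` as a linear map over `ℝ`. -/
noncomputable def bdryL : (Finset V → ℝ) →ₗ[ℝ] (Finset V → ℝ) where
  toFun := bdry
  map_add' x y := by
    funext σ; simp [bdry, mul_add, Finset.sum_add_distrib]
  map_smul' a x := by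
    funext σ; simp [bdry, Finset.mul_sum, mul_left_comm]

lemma bdry_bdry (c : Finset V → ℝ) : bdry (bdry c) = 0 := by
  funext σ
  simp only [bdry, Pi.zero_apply, Finset.mul_sum]
  rw [Finset.sum_sigma']
  refine Finset.sum_involution (fun p _ => ⟨p.2, p.1⟩) ?_ ?_ ?_ ?_
  · rintro ⟨v, w⟩ hp
    simp only [Finset.mem_sigma, Finset.mem_compl, Finset.mem_insert, not_or] at hp
    obtain ⟨hv, hwv, hw⟩ := hp
    have hvw : v ≠ w := fun h => hwv h.symm
    rcases hvw.lt_or_gt with h | h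
    · have h1 : ((insert v σ).filter fun u => u < w).card = (σ.filter fun u => u < w).card + 1 := by
        rw [Finset.filter_insert, if_pos h,
          Finset.card_insert_of_notMem fun hh => hv (Finset.mem_of_mem_filter _ hh)]
      have h2 : ((insert w σ).filter fun u => u < v).card = (σ.filter fun u => u < v).card := by
        rw [Finset.filter_insert, if_neg (not_lt.2 h.le)]
      show _ * (_ * c (insert w (insert v σ))) + _ * (_ * c (insert v (insert w σ))) = 0
      rw [h1, h2, Finset.insert_comm]
      ring
    · have h1 : ((insert w σ).filter fun u => u < v).card = (σ.filter fun u => u < v).card + 1 := by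
        rw [Finset.filter_insert, if_pos h,
          Finset.card_insert_of_notMem fun hh => hw (Finset.mem_of_mem_filter _ hh)]
      have h2 : ((insert v σ).filter fun u => u < w).card = (σ.filter fun u => u < w).card := by
        rw [Finset.filter_insert, if_neg (not_lt.2 h.le)]
      show _ * (_ * c (insert w (insert v σ))) + _ * (_ * c (insert v (insert w σ))) = 0
      rw [h1, h2, Finset.insert_comm]
      ring
  · rintro ⟨v, w⟩ hp _ h
    simp only [Finset.mem_sigma, Finset.mem_compl, Finset.mem_insert, not_or] at hp
    exact hp.2.1 (congrArg Sigma.fst h)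
  · rintro ⟨v, w⟩ hp
    simp only [Finset.mem_sigma, Finset.mem_compl, Finset.mem_insert, not_or] at hp ⊢
    exact ⟨hp.2.2, fun h => hp.2.1 h.symm, hp.1⟩
  · rintro ⟨v, w⟩ hp; rfl

/-- The submodule of chains supported in a set of simplices. -/
def suppSub (s : Set (Finset V)) : Submodule ℝ (Finset V → ℝ) where
  carrier := {c | ∀ σ, σ ∉ s → c σ = 0}
  add_mem' hx hy σ hσ := by simp only [Pi.add_apply, hx σ hσ, hy σ hσ, add_zero]
  zero_mem' σ _ := rfl
  smul_mem' a x hx σ hσ := by simp only [Pi.smul_apply, hx σ hσ, smul_zero]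

lemma sum_ind (x : Finset V → ℝ) : ∑ σ : Finset V, x σ • ind ℝ σ = x := by
  funext τ
  simp [ind, Finset.sum_apply, mul_ite, Finset.sum_ite_eq]

lemma evalC_lin (f : (Finset V → ℝ) →ₗ[ℝ] ℝ) (x : Finset V → ℝ) :
    evalC (fun τ => f (ind ℝ τ)) x = f x := by
  unfold evalC
  simp_rw [mul_comm, ← smul_eq_mul, ← map_smul, ← map_sum, sum_ind]

end AuxStmt7

/-- Lemma 6.1, LEM:Cut supports cocycle.
Let `K` be a finite abstract simplicial complex on a finite linearly ordered set `V` and `c`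
a 1-cycle of `K` with real coefficients.  If `C ⊆ K^(1)` is an inclusion-minimal homological
edge cut for `c`, then there is a 1-cochain `φ` with support exactly `C`, satisfying the
cocycle condition `φ(∂_2 σ) = 0` for every 2-simplex `σ ∈ K^(2)`, and `φ(c) = 1`. -/
theorem stmt_7 {V : Type*} [Fintype V] [LinearOrder V]
    (K : Finset (Finset V)) (hK : IsComplex K) (c : Finset V → ℝ) (hc : IsCycleOf K 1 c)
    (C : Finset (Finset V)) (hC : C ⊆ pSimplices K 1) (hcut : IsHomCut K C c)
    (hmin : ∀ C' : Finset (Finset V), C' ⊂ C → ¬ IsHomCut K C' c) :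
    ∃ φ : Finset V → ℝ,
      {e : Finset V | φ e ≠ 0} = (↑C : Set (Finset V)) ∧
      (∀ σ ∈ pSimplices K 2, evalC φ (bdry (ind ℝ σ)) = 0) ∧
      evalC φ c = 1 := by
  classical
  set B : Submodule ℝ (Finset V → ℝ) :=
    Submodule.map bdryL (suppSub (↑(pSimplices K 2) : Set (Finset V))) with hB
  set X : Submodule ℝ (Finset V → ℝ) := suppSub {τ : Finset V | τ ∉ C} with hX
  set U : Submodule ℝ (Finset V → ℝ) := B ⊔ X with hU
  -- step 1: c ∉ U
  have hcU : c ∉ U := by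
    intro hmem
    rw [hU, Submodule.mem_sup] at hmem
    obtain ⟨b, hb, x, hx, hbx⟩ := hmem
    obtain ⟨b', hb', rfl⟩ := hb
    have hx' : x = c - bdryL b' := eq_sub_of_add_eq' hbx
    -- the support of x
    have hxsupp : ∀ σ : Finset V, x σ ≠ 0 → σ ∈ K ∧ σ.card = 2 ∧ σ ∉ C := by
      intro σ hσ
      have hσC : σ ∉ C := fun h => hσ (hx σ (by simp [h]))
      have hKc : σ ∈ K ∧ σ.card = 2 := by
        have hval : x σ = c σ - bdryL b' σ := by rw [hx']; rfl
        by_cases hcσ : c σ ≠ 0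
        · exact hc.1 σ hcσ
        · push_neg at hcσ
          have hbσ : bdryL b' σ ≠ 0 := by
            intro h; rw [hval, hcσ, h, sub_zero] at hσ; exact hσ rfl
          obtain ⟨v, hv, hne⟩ := Finset.exists_ne_zero_of_sum_ne_zero hbσ
          have hb'ne : b' (insert v σ) ≠ 0 := fun h => hne (by simp [h])
          have hmem2 : insert v σ ∈ pSimplices K 2 := by
            by_contra h; exact hb'ne (hb' _ h)
          rw [pSimplices, Finset.mem_filter] at hmem2
          have hvσ : v ∉ σ := Finset.mem_compl.1 hv
          have hcard : σ.card = 2 := by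
            have := hmem2.2
            rw [Finset.card_insert_of_notMem hvσ] at this
            omega
          have hne' : σ.Nonempty := Finset.card_pos.1 (by omega)
          exact ⟨hK.2 _ hmem2.1 σ (Finset.subset_insert _ _) hne', hcard⟩
      exact ⟨hKc.1, hKc.2, hσC⟩
    apply hcut
    refine ⟨x, ⟨?_, ?_⟩, ⟨-b', ?_, ?_⟩⟩
    · -- suppIn (deleteSimps K C) 1 x
      intro σ hσ
      obtain ⟨h1, h2, h3⟩ := hxsupp σ hσ
      refine ⟨Finset.mem_filter.2 ⟨h1, fun τ hτ hsub => ?_⟩, h2⟩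
      have hτcard : τ.card = 2 := by
        have := hC hτ; rw [pSimplices, Finset.mem_filter] at this; exact this.2
      have : τ = σ := Finset.eq_of_subset_of_card_le hsub (by omega)
      exact h3 (this ▸ hτ)
    · -- bdry x = 0
      have : bdryL x = 0 := by
        rw [hx', map_sub]
        have h1 : bdryL c = 0 := hc.2
        have h2 : bdryL (bdryL b') = 0 := bdry_bdry b'
        rw [h1, h2, sub_zero]
      exact this
    · -- suppIn K 2 (-b')
      intro σ hσ
      have : b' σ ≠ 0 := fun h => hσ (by simp [h])
      have hmem2 : σ ∈ pSimplices K 2 := by by_contra h; exact this (hb' _ h)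
      rw [pSimplices, Finset.mem_filter] at hmem2
      exact hmem2
    · -- x - c = bdry (-b')
      have : x - c = bdryL (-b') := by rw [hx', map_neg]; abel
      exact this
  -- step 2: find the dual functional
  obtain ⟨f, hfc, hfU⟩ := U.exists_dual_map_eq_bot_of_notMem hcU inferInstance
  have hfU' : ∀ y ∈ U, f y = 0 := by
    intro y hy
    have : f y ∈ U.map f := Submodule.mem_map_of_mem hy
    rw [hfU] at this
    simpa using this
  set g : (Finset V → ℝ) →ₗ[ℝ] ℝ := (f c)⁻¹ • f with hg
  have hgU : ∀ y ∈ U, g y = 0 := fun y hy => by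
    simp [hg, hfU' y hy]
  have hgc : g c = 1 := by simp [hg, inv_mul_cancel₀ hfc]
  refine ⟨fun τ => g (ind ℝ τ), ?_, ?_, ?_⟩
  · -- support is exactly C
    have hsupp : ∀ τ : Finset V, τ ∉ C → g (ind ℝ τ) = 0 := by
      intro τ hτ
      refine hgU _ (Submodule.mem_sup_right ?_)
      intro σ hσ
      simp only [Set.mem_setOf_eq, not_not] at hσ
      have : σ ≠ τ := fun h => hτ (h ▸ hσ)
      simp [ind, this]
    ext e
    simp only [Set.mem_setOf_eq, Finset.coe_mem, Finset.mem_coe]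
    constructor
    · intro h
      by_contra he
      exact h (hsupp e he)
    · intro he
      -- use minimality: C.erase e is not a cut
      have hss : C.erase e ⊂ C := Finset.erase_ssubset he
      have hnc := hmin _ hss
      rw [IsHomCut, not_not] at hnc
      obtain ⟨z, ⟨hz1, hz2⟩, b, hb, hzc⟩ := hnc
      -- g z = 1
      have hbU : bdryL b ∈ U := by
        refine Submodule.mem_sup_left (Submodule.mem_map_of_mem ?_)
        intro σ hσ
        by_contra h
        obtain ⟨h1, h2⟩ := hb σ h
        exact hσ (Finset.mem_coe.2 (Finset.mem_filter.2 ⟨h1, h2⟩))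
      have hz : z = c + bdryL b := by
        have : z - c = bdryL b := hzc
        rw [← this]; abel
      have hgz : g z = 1 := by rw [hz, map_add, hgc, hgU _ hbU, add_zero]
      -- g z = g(ind e) * z e
      have hgz' : g z = g (ind ℝ e) * z e := by
        have : g z = evalC (fun τ => g (ind ℝ τ)) z := (evalC_lin g z).symm
        rw [this]
        unfold evalC
        rw [Finset.sum_eq_single e]
        · intro τ _ hτe
          show g (ind ℝ τ) * z τ = 0
          by_cases hgτ : g (ind ℝ τ) = 0
          · rw [hgτ, zero_mul]
          · have hτC : τ ∈ C := by by_contra h; exact hgτ (hsupp τ h)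
            have hzτ : z τ = 0 := by
              by_contra h
              have := hz1 τ h
              rw [deleteSimps, Finset.mem_filter] at this
              exact this.1.2 τ (Finset.mem_erase.2 ⟨hτe, hτC⟩) (subset_refl τ)
            rw [hzτ, mul_zero]
        · intro h; exact absurd (Finset.mem_univ e) h
      intro h
      rw [hgz, h, zero_mul] at hgz'
      exact one_ne_zero hgz'
  · -- cocycle condition
    intro σ hσ
    rw [show (bdry (ind ℝ σ) : Finset V → ℝ) = bdryL (ind ℝ σ) from rfl, evalC_lin]
    refine hgU _ (Submodule.mem_sup_left (Submodule.mem_map_of_mem ?_))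
    intro τ hτ
    have : τ ≠ σ := fun h => hτ (h ▸ Finset.mem_coe.2 hσ)
    simp [ind, this]
  · rw [evalC_lin, hgc]
end

section
/- Let V be a finite linearly ordered set, K a finite abstract simplicial complex on V, and c a 1-cycle of K with real coefficients. If φ : K^(1) → ℝ is a 1-cochain satisfying φ(∂_2 σ) = 0 for every 2-simplex σ ∈ K^(2) and φ(c) = 1, then the support Supp(φ) = {e ∈ K^(1) : φ(e) ≠ 0} is a homological edge cut for c. -/
open Finset

variable {V : Type*} [Fintype V] [LinearOrder V]

lemma bdry_expand {V : Type*} [Fintype V] [LinearOrder V] (b : Finset V → ℝ) (σ : Finset V) :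
    bdry b σ = ∑ τ : Finset V, b τ * bdry (ind ℝ τ) σ := by
  unfold bdry ind
  symm
  simp_rw [Finset.mul_sum]
  rw [Finset.sum_comm]
  refine Finset.sum_congr rfl fun v hv => ?_
  simp [mul_ite, Finset.sum_ite_eq, mul_comm]

/-- from the proof of Proposition 6.2, PROP:ell0.
Let `K` be a finite abstract simplicial complex on a finite linearly ordered set `V` and `c`
a 1-cycle of `K` with real coefficients.  If `φ : K^(1) → ℝ` is a 1-cochain with
`φ(∂_2 σ) = 0` for every 2-simplex `σ ∈ K^(2)` and `φ(c) = 1`, then the support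
`{e ∈ K^(1) : φ e ≠ 0}` of `φ` is a homological edge cut for `c`. -/
theorem stmt_8 {V : Type*} [Fintype V] [LinearOrder V]
    (K : Finset (Finset V)) (hK : IsComplex K) (c : Finset V → ℝ) (hc : IsCycleOf K 1 c)
    (φ : Finset V → ℝ)
    (hcocycle : ∀ σ ∈ pSimplices K 2, evalC φ (bdry (ind ℝ σ)) = 0)
    (hval : evalC φ c = 1) :
    IsHomCut K ((pSimplices K 1).filter fun e => φ e ≠ 0) c := by
  rintro ⟨z, ⟨hzsupp, _⟩, b, hbsupp, hzc⟩
  have hz0 : evalC φ z = 0 := by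
    refine Finset.sum_eq_zero fun σ _ => ?_
    by_cases hσ : z σ = 0
    · simp [hσ]
    · obtain ⟨hσK, hσcard⟩ := hzsupp σ hσ
      rw [deleteSimps, Finset.mem_filter] at hσK
      have hσ1 : σ ∈ pSimplices K 1 := by
        rw [pSimplices, Finset.mem_filter]; exact ⟨hσK.1, hσcard⟩
      have : φ σ = 0 := by
        by_contra hφ
        exact hσK.2 σ (Finset.mem_filter.2 ⟨hσ1, hφ⟩) subset_rfl
      simp [this]
  have hbd0 : evalC φ (bdry b) = 0 := by
    unfold evalC
    have : ∀ σ : Finset V, φ σ * bdry b σ = ∑ τ : Finset V, b τ * (φ σ * bdry (ind ℝ τ) σ) := by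
      intro σ
      rw [bdry_expand, Finset.mul_sum]
      exact Finset.sum_congr rfl fun τ _ => by ring
    simp_rw [this]
    rw [Finset.sum_comm]
    refine Finset.sum_eq_zero fun τ _ => ?_
    by_cases hb : b τ = 0
    · simp [hb]
    · obtain ⟨hτK, hτcard⟩ := hbsupp τ hb
      have : τ ∈ pSimplices K 2 := Finset.mem_filter.2 ⟨hτK, hτcard⟩
      rw [← Finset.mul_sum]
      have := hcocycle τ this
      unfold evalC at this
      rw [this, mul_zero]
  have hsub : evalC φ z - evalC φ c = evalC φ (bdry b) := by
    rw [← hzc]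
    unfold evalC
    rw [← Finset.sum_sub_distrib]
    exact Finset.sum_congr rfl fun σ _ => by simp [Pi.sub_apply]; ring
  rw [hz0, hval, hbd0] at hsub
  norm_num at hsub
end

section
/- There exist a finite linearly ordered set V, a finite 2-dimensional abstract simplicial complex K on V, and a 1-cycle c of K with real coefficients whose homology class is nonzero, such that the minimum cardinality of a homological edge cut for c equals 3, while the homological maximum flow sup { r ∈ ℝ : there exists B ∈ C_2(K;ℝ) with |(∂_2 B + r·c)(e)| ≤ 1 for every edge e ∈ K^(1) } equals 3/2. In particular, a max-flow/min-cut theorem fails for homological edge cuts, and the natural linear programming relaxation of the minimum homological cut problem is not tight. -/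
open Finset

variable {V : Type*} [Fintype V] [LinearOrder V]

/-- The content of Example 6.3: a finite 2-dimensional simplicial complex `K` on `V` and a
1-cycle `c` over `ℝ` with nonzero homology class such that the minimum cardinality of a
homological edge cut for `c` is `3`, while the homological maximum flow
`sup { r | ∃ B ∈ C_2(K;ℝ), |(∂_2 B + r·c)(e)| ≤ 1 for all e ∈ K^(1) }` is `3/2`. -/
def Stmt11Prop (V : Type) [Fintype V] [LinearOrder V] : Prop :=
  ∃ (K : Finset (Finset V)) (c : Finset V → ℝ),
    IsComplex K ∧ (∀ σ ∈ K, σ.card ≤ 3) ∧ (∃ σ ∈ K, σ.card = 3) ∧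
    IsCycleOf K 1 c ∧ (¬ ∃ b : Finset V → ℝ, suppIn K 2 b ∧ bdry b = c) ∧
    sInf { n : ℕ | ∃ C : Finset (Finset V),
      C ⊆ pSimplices K 1 ∧ IsHomCut K C c ∧ C.card = n } = 3 ∧
    sSup { r : ℝ | ∃ B : Finset V → ℝ, suppIn K 2 B ∧
      ∀ e ∈ pSimplices K 1, |(bdry B + r • c) e| ≤ 1 } = 3 / 2

/-! ### Auxiliary machinery for the proof -/

section Aux
variable {V : Type*} [Fintype V] [LinearOrder V]

/-- The simplicial coboundary-type operator adjoint to `bdry` under `evalC`. -/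
def cobdry {F : Type*} [CommRing F] (φ : Finset V → F) : Finset V → F :=
  fun τ => ∑ v ∈ τ, (-1 : F) ^ ((τ.erase v).filter fun u => u < v).card * φ (τ.erase v)

lemma evalC_bdry {F : Type*} [CommRing F] (φ b : Finset V → F) :
    evalC φ (bdry b) = evalC (cobdry φ) b := by
  unfold evalC bdry cobdry
  calc ∑ σ : Finset V, φ σ * ∑ v ∈ σᶜ,
          (-1 : F) ^ (σ.filter fun u => u < v).card * b (insert v σ)
      = ∑ σ : Finset V, ∑ v ∈ σᶜ,
          (-1 : F) ^ (σ.filter fun u => u < v).card * φ σ * b (insert v σ) := by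
        refine Finset.sum_congr rfl fun σ _ => ?_
        rw [Finset.mul_sum]
        exact Finset.sum_congr rfl fun v _ => by ring
    _ = ∑ p ∈ (Finset.univ : Finset (Finset V)).sigma fun σ => σᶜ,
          (-1 : F) ^ (p.1.filter fun u => u < p.2).card * φ p.1 * b (insert p.2 p.1) := by
        rw [Finset.sum_sigma]
    _ = ∑ p ∈ (Finset.univ : Finset (Finset V)).sigma fun τ => τ,
          (-1 : F) ^ ((p.1.erase p.2).filter fun u => u < p.2).card * φ (p.1.erase p.2)
            * b p.1 := by
        refine Finset.sum_nbij' (fun p => ⟨insert p.2 p.1, p.2⟩)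
          (fun p => ⟨p.1.erase p.2, p.2⟩) ?_ ?_ ?_ ?_ ?_
        · rintro ⟨σ, v⟩ hp
          simp only [Finset.mem_sigma, Finset.mem_compl] at hp ⊢
          exact ⟨Finset.mem_univ _, Finset.mem_insert_self _ _⟩
        · rintro ⟨τ, v⟩ hp
          simp only [Finset.mem_sigma, Finset.mem_compl] at hp ⊢
          exact ⟨Finset.mem_univ _, Finset.notMem_erase _ _⟩
        · rintro ⟨σ, v⟩ hp
          simp only [Finset.mem_sigma, Finset.mem_compl] at hp
          simp [Finset.erase_insert hp.2]
        · rintro ⟨τ, v⟩ hp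
          simp only [Finset.mem_sigma] at hp
          simp [Finset.insert_erase hp.2]
        · rintro ⟨σ, v⟩ hp
          simp only [Finset.mem_sigma, Finset.mem_compl] at hp
          simp [Finset.erase_insert hp.2]
    _ = ∑ τ : Finset V, ∑ v ∈ τ,
          (-1 : F) ^ ((τ.erase v).filter fun u => u < v).card * φ (τ.erase v) * b τ := by
        rw [Finset.sum_sigma]
    _ = ∑ τ : Finset V,
          (∑ v ∈ τ, (-1 : F) ^ ((τ.erase v).filter fun u => u < v).card * φ (τ.erase v))
            * b τ := by
        refine Finset.sum_congr rfl fun τ _ => ?_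
        rw [Finset.sum_mul]

lemma evalC_zero_of_cobdry {F : Type*} [CommRing F] (φ b : Finset V → F)
    (h : ∀ τ, b τ ≠ 0 → cobdry φ τ = 0) : evalC φ (bdry b) = 0 := by
  rw [evalC_bdry]
  refine Finset.sum_eq_zero fun τ _ => ?_
  by_cases hb : b τ = 0
  · simp [hb]
  · simp [h τ hb]

lemma evalC_sub (φ f g : Finset V → ℝ) : evalC φ (f - g) = evalC φ f - evalC φ g := by
  simp [evalC, mul_sub, Finset.sum_sub_distrib]

lemma evalC_add (φ f g : Finset V → ℝ) : evalC φ (f + g) = evalC φ f + evalC φ g := by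
  simp [evalC, mul_add, Finset.sum_add_distrib]

lemma evalC_smul (φ c : Finset V → ℝ) (r : ℝ) : evalC φ (r • c) = r * evalC φ c := by
  simp only [evalC, Pi.smul_apply, smul_eq_mul, Finset.mul_sum]
  exact Finset.sum_congr rfl fun σ _ => by ring

lemma bdry_cast (g : Finset V → ℤ) :
    bdry (fun σ => ((g σ : ℤ) : ℝ)) = fun σ => ((bdry g σ : ℤ) : ℝ) := by
  funext σ
  simp only [bdry]
  push_cast
  rfl

lemma cobdry_cast (g : Finset V → ℤ) :
    cobdry (fun σ => ((g σ : ℤ) : ℝ)) = fun σ => ((cobdry g σ : ℤ) : ℝ) := by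
  funext σ
  simp only [cobdry]
  push_cast
  rfl

lemma evalC_cast (y g : Finset V → ℤ) :
    evalC (fun σ => ((y σ : ℤ) : ℝ)) (fun σ => ((g σ : ℤ) : ℝ)) = ((evalC y g : ℤ) : ℝ) := by
  simp only [evalC]
  push_cast
  rfl

lemma deleteSimps_anti {K C C' : Finset (Finset V)} (h : C ⊆ C') :
    deleteSimps K C' ⊆ deleteSimps K C := by
  intro σ hσ
  simp only [deleteSimps, Finset.mem_filter] at hσ ⊢
  exact ⟨hσ.1, fun τ hτ => hσ.2 τ (h hτ)⟩

end Aux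

/-! ### The concrete example: the 5-vertex Möbius band -/

/-- The Möbius band on 5 vertices: triangles `{i, i+1, i+2}` mod 5 and all their faces. -/
def KK : Finset (Finset (Fin 5)) :=
  { {0}, {1}, {2}, {3}, {4},
    {0,1}, {0,2}, {0,3}, {0,4}, {1,2}, {1,3}, {1,4}, {2,3}, {2,4}, {3,4},
    {0,1,2}, {1,2,3}, {2,3,4}, {0,3,4}, {0,1,4} }

/-- The boundary circle `0-2-4-1-3-0` of the Möbius band, as an integral 1-cycle. -/
def cZ : Finset (Fin 5) → ℤ := fun σ =>
  if σ = {0,2} then 1 else if σ = {2,4} then 1 else if σ = {1,3} then 1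
  else if σ = {1,4} then -1 else if σ = {0,3} then -1 else 0

/-- The dual certificate: an integral cocycle supported on three edges with
`⟨yZ, cZ⟩ = 2` and `‖yZ‖₁ = 3`. -/
def yZ : Finset (Fin 5) → ℤ := fun σ =>
  if σ = {0,1} then 1 else if σ = {0,2} then 1 else if σ = {1,4} then -1 else 0

/-- A 2-chain from coefficients on the five triangles. -/
def bfun (co : Fin 5 → ℤ) : Finset (Fin 5) → ℤ := fun σ =>
  if σ = {0,1,2} then co 0 else if σ = {1,2,3} then co 1 else if σ = {2,3,4} then co 2
  else if σ = {0,3,4} then co 3 else if σ = {0,1,4} then co 4 else 0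

/-- The minimum homological cut. -/
def C0 : Finset (Finset (Fin 5)) := { {0,1}, {0,2}, {1,4} }

def tbl : List (Finset (Finset (Fin 5)) × (Fin 5 → ℤ)) := [
  ({{0,1},{0,2}}, ![1, 0, 0, 0, -1]),
  ({{0,1},{0,3}}, ![0, 0, 0, 1, 0]),
  ({{0,1},{0,4}}, ![0, 0, 0, 0, 0]),
  ({{0,1},{1,2}}, ![0, 0, 0, 0, 0]),
  ({{0,1},{1,3}}, ![0, 1, 0, 0, 0]),
  ({{0,1},{1,4}}, ![-1, 0, 0, 0, 1]),
  ({{0,1},{2,3}}, ![0, 0, 0, 0, 0]),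
  ({{0,1},{2,4}}, ![0, 0, 1, 0, 0]),
  ({{0,1},{3,4}}, ![0, 0, 0, 0, 0]),
  ({{0,2},{0,3}}, ![1, 0, 0, 1, 0]),
  ({{0,2},{0,4}}, ![1, 0, 0, 0, 0]),
  ({{0,2},{1,2}}, ![1, -1, 0, 0, 0]),
  ({{0,2},{1,3}}, ![1, 1, 0, 0, 0]),
  ({{0,2},{1,4}}, ![1, 0, 0, 0, 1]),
  ({{0,2},{2,3}}, ![1, 0, 0, 0, 0]),
  ({{0,2},{2,4}}, ![1, 0, 1, 0, 0]),
  ({{0,2},{3,4}}, ![1, 0, 0, 0, 0]),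
  ({{0,3},{0,4}}, ![0, 0, 0, 1, -1]),
  ({{0,3},{1,2}}, ![0, 0, 0, 1, 0]),
  ({{0,3},{1,3}}, ![0, 1, 0, 1, 0]),
  ({{0,3},{1,4}}, ![0, 0, 0, 1, 1]),
  ({{0,3},{2,3}}, ![0, 0, 0, 1, 0]),
  ({{0,3},{2,4}}, ![0, 0, 1, 1, 0]),
  ({{0,3},{3,4}}, ![0, 0, -1, 1, 0]),
  ({{0,4},{1,2}}, ![0, 0, 0, 0, 0]),
  ({{0,4},{1,3}}, ![0, 1, 0, 0, 0]),
  ({{0,4},{1,4}}, ![0, 0, 0, -1, 1]),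
  ({{0,4},{2,3}}, ![0, 0, 0, 0, 0]),
  ({{0,4},{2,4}}, ![0, 0, 1, 0, 0]),
  ({{0,4},{3,4}}, ![0, 0, 0, 0, 0]),
  ({{1,2},{1,3}}, ![-1, 1, 0, 0, 0]),
  ({{1,2},{1,4}}, ![0, 0, 0, 0, 1]),
  ({{1,2},{2,3}}, ![0, 0, 0, 0, 0]),
  ({{1,2},{2,4}}, ![0, 0, 1, 0, 0]),
  ({{1,2},{3,4}}, ![0, 0, 0, 0, 0]),
  ({{1,3},{1,4}}, ![0, 1, 0, 0, 1]),
  ({{1,3},{2,3}}, ![0, 1, -1, 0, 0]),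
  ({{1,3},{2,4}}, ![0, 1, 1, 0, 0]),
  ({{1,3},{3,4}}, ![0, 1, 0, 0, 0]),
  ({{1,4},{2,3}}, ![0, 0, 0, 0, 1]),
  ({{1,4},{2,4}}, ![0, 0, 1, 0, 1]),
  ({{1,4},{3,4}}, ![0, 0, 0, 0, 1]),
  ({{2,3},{2,4}}, ![0, -1, 1, 0, 0]),
  ({{2,3},{3,4}}, ![0, 0, 0, 0, 0]),
  ({{2,4},{3,4}}, ![0, 0, 1, -1, 0])]


/-! ### Decidable facts -/

set_option maxRecDepth 20000 in
lemma dKcomplex : IsComplex KK := by unfold IsComplex; decide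

lemma dKdim : ∀ σ ∈ KK, σ.card ≤ 3 := by decide

lemma dKtri : ({0,1,2} : Finset (Fin 5)) ∈ KK ∧ ({0,1,2} : Finset (Fin 5)).card = 3 := by decide

lemma dcsupp : ∀ σ : Finset (Fin 5), cZ σ ≠ 0 → σ ∈ KK ∧ σ.card = 2 := by decide

lemma dccyc : ∀ σ : Finset (Fin 5), bdry cZ σ = 0 := by decide

lemma dycocyc : ∀ τ ∈ KK, τ.card = 3 → cobdry yZ τ = 0 := by decide

lemma dyc : evalC yZ cZ = 2 := by decide

lemma dysupp : ∀ σ : Finset (Fin 5), σ ∉ C0 → yZ σ = 0 := by decide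

lemma dC0 : C0 ⊆ pSimplices KK 1 ∧ C0.card = 3 := by decide

lemma dC0del : ∀ σ ∈ C0, σ ∉ deleteSimps KK C0 := by decide

lemma dP1card : 2 ≤ (pSimplices KK 1).card := by decide

set_option maxRecDepth 40000 in
set_option maxHeartbeats 2000000 in
lemma dcov : ∀ e ∈ pSimplices KK 1, ∀ f ∈ pSimplices KK 1, e ≠ f →
    ∃ p ∈ tbl, p.1 = insert e {f} := by decide

lemma dflow : ∀ e ∈ pSimplices KK 1, |bdry (bfun ![1,1,1,1,1]) e + 3 * cZ e| ≤ 2 := by decide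

lemma dbAllsupp : ∀ σ : Finset (Fin 5), bfun ![1,1,1,1,1] σ ≠ 0 → σ ∈ KK ∧ σ.card = 3 := by
  decide

lemma dedges : ({0,1} : Finset (Fin 5)) ∈ pSimplices KK 1 ∧
    ({0,2} : Finset (Fin 5)) ∈ pSimplices KK 1 ∧
    ({1,4} : Finset (Fin 5)) ∈ pSimplices KK 1 := by decide

lemma dmaster : ∀ p ∈ tbl,
    (∀ σ : Finset (Fin 5), cZ σ + bdry (bfun p.2) σ ≠ 0 →
      σ ∈ deleteSimps KK p.1 ∧ σ.card = 2) ∧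
    (∀ σ : Finset (Fin 5), bdry (fun τ => cZ τ + bdry (bfun p.2) τ) σ = 0) ∧
    (∀ σ : Finset (Fin 5), bfun p.2 σ ≠ 0 → σ ∈ KK ∧ σ.card = 3) := by decide


/-! ### Glue lemmas over `ℝ` -/

/-- The real 1-cycle `c`: the boundary circle of the Möbius band. -/
def cR : Finset (Fin 5) → ℝ := fun σ => ((cZ σ : ℤ) : ℝ)

/-- The real dual certificate. -/
def yR : Finset (Fin 5) → ℝ := fun σ => ((yZ σ : ℤ) : ℝ)

lemma cocycleR (b : Finset (Fin 5) → ℝ) (hb : suppIn KK 2 b) : evalC yR (bdry b) = 0 := by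
  refine evalC_zero_of_cobdry _ _ fun τ hτ => ?_
  obtain ⟨h1, h2⟩ := hb τ hτ
  have : cobdry yR τ = ((cobdry yZ τ : ℤ) : ℝ) := congrFun (cobdry_cast yZ) τ
  rw [this, dycocyc τ h1 h2, Int.cast_zero]

lemma evalyc : evalC yR cR = 2 := by
  have : evalC yR cR = ((evalC yZ cZ : ℤ) : ℝ) := evalC_cast yZ cZ
  rw [this, dyc]; norm_num

lemma bdry_const_mul (k : ℝ) (f : Finset (Fin 5) → ℝ) :
    bdry (fun σ => k * f σ) = fun σ => k * bdry f σ := by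
  funext σ
  simp only [bdry, Finset.mul_sum]
  exact Finset.sum_congr rfl fun v _ => by ring

lemma yZvals : yZ {0,1} = 1 ∧ yZ {0,2} = 1 ∧ yZ {1,4} = -1 := by decide

/-- The homological cut of size 3. -/
lemma cut_C0 : IsHomCut KK C0 cR := by
  rintro ⟨z, ⟨hzs, _⟩, ⟨b, hbs, hzcb⟩⟩
  have h1 : evalC yR (z - cR) = 0 := by rw [hzcb]; exact cocycleR b hbs
  have h2 : evalC yR z = 0 := by
    refine Finset.sum_eq_zero fun σ _ => ?_
    by_cases hz : z σ = 0
    · simp [hz]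
    · have hmem := (hzs σ hz).1
      have hy : yZ σ = 0 := dysupp σ fun hc => dC0del σ hc hmem
      simp [yR, hy]
  rw [evalC_sub, h2, evalyc] at h1
  norm_num at h1

/-- No set of at most two edges is a homological cut. -/
lemma no_small_cut (C : Finset (Finset (Fin 5))) (hC1 : C ⊆ pSimplices KK 1)
    (hcard : C.card ≤ 2) : ¬ IsHomCut KK C cR := by
  intro hC2
  obtain ⟨C', hCC', hC'P, hC'card⟩ := Finset.exists_subsuperset_card_eq hC1 hcard dP1card
  obtain ⟨e, f, hne, rfl⟩ := Finset.card_eq_two.mp hC'card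
  have he : e ∈ pSimplices KK 1 := hC'P (by simp)
  have hf : f ∈ pSimplices KK 1 := hC'P (by simp)
  obtain ⟨p, hp, hpeq⟩ := dcov e he f hf hne
  obtain ⟨m1, m2, m3⟩ := dmaster p hp
  refine hC2 ⟨fun σ => ((cZ σ + bdry (bfun p.2) σ : ℤ) : ℝ), ⟨?_, ?_⟩,
    fun σ => ((bfun p.2 σ : ℤ) : ℝ), ?_, ?_⟩
  · intro σ h
    have hz : cZ σ + bdry (bfun p.2) σ ≠ 0 := by
      have h' : ((cZ σ + bdry (bfun p.2) σ : ℤ) : ℝ) ≠ 0 := h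
      exact_mod_cast h'
    obtain ⟨hm, hc⟩ := m1 σ hz
    rw [hpeq] at hm
    exact ⟨deleteSimps_anti hCC' hm, hc⟩
  · have : (fun σ => ((cZ σ + bdry (bfun p.2) σ : ℤ) : ℝ))
        = fun σ => (((fun τ => cZ τ + bdry (bfun p.2) τ) σ : ℤ) : ℝ) := rfl
    rw [this, bdry_cast]
    funext σ
    rw [m2 σ]
    simp
  · intro σ h
    have h' : ((bfun p.2 σ : ℤ) : ℝ) ≠ 0 := h
    exact m3 σ (by exact_mod_cast h')
  · rw [bdry_cast]
    funext σ
    simp only [Pi.sub_apply, cR]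
    push_cast
    ring


/-- Feasibility of the flow value `3/2`. -/
lemma flow_mem : ∃ B : Finset (Fin 5) → ℝ, suppIn KK 2 B ∧
    ∀ e ∈ pSimplices KK 1, |(bdry B + (3/2 : ℝ) • cR) e| ≤ 1 := by
  refine ⟨fun σ => (1/2 : ℝ) * ((bfun ![1,1,1,1,1] σ : ℤ) : ℝ), ?_, ?_⟩
  · intro σ h
    refine dbAllsupp σ fun h0 => h ?_
    show (1/2 : ℝ) * ((bfun ![1,1,1,1,1] σ : ℤ) : ℝ) = 0
    rw [h0]; norm_num
  · intro e he
    have key : ((|bdry (bfun ![1,1,1,1,1]) e + 3 * cZ e| : ℤ) : ℝ) ≤ 2 := by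
      exact_mod_cast dflow e he
    rw [Int.cast_abs] at key
    have heq : (bdry (fun σ => (1/2 : ℝ) * ((bfun ![1,1,1,1,1] σ : ℤ) : ℝ))
        + (3/2 : ℝ) • cR) e
        = (1/2 : ℝ) * ((bdry (bfun ![1,1,1,1,1]) e + 3 * cZ e : ℤ) : ℝ) := by
      rw [Pi.add_apply, bdry_const_mul]
      beta_reduce
      have : bdry (fun σ => ((bfun ![1,1,1,1,1] σ : ℤ) : ℝ)) e
          = ((bdry (bfun ![1,1,1,1,1]) e : ℤ) : ℝ) := congrFun (bdry_cast _) e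
      rw [this]
      simp only [Pi.smul_apply, smul_eq_mul, cR]
      push_cast
      ring
    rw [heq, abs_mul]
    rw [show |(1/2 : ℝ)| = 1/2 by norm_num]
    linarith

/-- The dual bound: every feasible flow value is at most `3/2`. -/
lemma flow_ub (r : ℝ) (B : Finset (Fin 5) → ℝ) (hBs : suppIn KK 2 B)
    (hBb : ∀ e ∈ pSimplices KK 1, |(bdry B + r • cR) e| ≤ 1) : r ≤ 3/2 := by
  have hzero : evalC yR (bdry B) = 0 := cocycleR B hBs
  have hE : evalC yR (bdry B + r • cR) = 2 * r := by
    rw [evalC_add, hzero, evalC_smul, evalyc]; ring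
  set g : Finset (Fin 5) → ℝ := bdry B + r • cR with hg
  have hsum : evalC yR g = ∑ σ ∈ C0, yR σ * g σ := by
    refine (Finset.sum_subset (Finset.subset_univ C0) ?_).symm
    intro x _ hx
    show yR x * g x = 0
    have : yZ x = 0 := dysupp x hx
    simp [yR, this]
  have hexp : ∑ σ ∈ C0, yR σ * g σ = g {0,1} + g {0,2} + (-1) * g {1,4} := by
    rw [show C0 = insert ({0,1} : Finset (Fin 5)) (insert {0,2} {{1,4}}) from rfl]
    rw [Finset.sum_insert (by decide), Finset.sum_insert (by decide), Finset.sum_singleton]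
    rw [show yR {0,1} = 1 by simp [yR, yZvals.1], show yR {0,2} = 1 by simp [yR, yZvals.2.1],
      show yR {1,4} = -1 by simp [yR, yZvals.2.2]]
    ring
  have h1 := hBb {0,1} dedges.1
  have h2 := hBb {0,2} dedges.2.1
  have h3 := hBb {1,4} dedges.2.2
  have ha1 := le_abs_self (g {0,1})
  have ha2 := le_abs_self (g {0,2})
  have ha3 := neg_abs_le (g {1,4})
  have : 2 * r ≤ 3 := by
    rw [← hE, hsum, hexp]
    calc g {0,1} + g {0,2} + (-1) * g {1,4}
        ≤ |g {0,1}| + |g {0,2}| + |g {1,4}| := by linarith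
      _ ≤ 3 := by
          have b1 : |g {0,1}| ≤ 1 := h1
          have b2 : |g {0,2}| ≤ 1 := h2
          have b3 : |g {1,4}| ≤ 1 := h3
          linarith
  linarith

/-- Example 6.3, EXMP:mincutmaxflow.
There exist a finite linearly ordered set `V`, a finite 2-dimensional abstract simplicial
complex `K` on `V`, and a 1-cycle `c` of `K` over `ℝ` with nonzero homology class, such that
the minimum cardinality of a homological edge cut for `c` is `3` while the homological
maximum flow for `c` is `3/2`.  In particular, max-flow/min-cut fails for homological edge
cuts and the LP relaxation of the minimum homological cut problem is not tight. -/
theorem stmt_11 :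
    ∃ (V : Type) (iF : Fintype V) (iL : LinearOrder V), @Stmt11Prop V iF iL := by
  refine ⟨Fin 5, inferInstance, inferInstance, ?_⟩
  unfold Stmt11Prop
  refine ⟨KK, cR, dKcomplex, dKdim, ⟨{0,1,2}, dKtri.1, dKtri.2⟩, ⟨?_, ?_⟩, ?_, ?_, ?_⟩
  · -- `cR` is supported on the edges of `KK`
    intro σ h
    have h' : ((cZ σ : ℤ) : ℝ) ≠ 0 := h
    exact dcsupp σ (by exact_mod_cast h')
  · -- `cR` is a cycle
    rw [show cR = fun σ => ((cZ σ : ℤ) : ℝ) from rfl, bdry_cast]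
    funext σ
    rw [dccyc σ]
    simp
  · -- `cR` is not a boundary
    rintro ⟨b, hb, hbd⟩
    have h0 := cocycleR b hb
    rw [hbd, evalyc] at h0
    norm_num at h0
  · -- the minimum homological cut has cardinality 3
    have h3mem : 3 ∈ {n : ℕ | ∃ C : Finset (Finset (Fin 5)),
        C ⊆ pSimplices KK 1 ∧ IsHomCut KK C cR ∧ C.card = n} :=
      ⟨C0, dC0.1, cut_C0, dC0.2⟩
    refine le_antisymm (Nat.sInf_le h3mem) (le_csInf ⟨3, h3mem⟩ ?_)
    rintro n ⟨C, hC1, hC2, hC3⟩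
    by_contra hlt
    push_neg at hlt
    exact no_small_cut C hC1 (by omega) hC2
  · -- the maximum homological flow is 3/2
    refine le_antisymm (csSup_le ⟨3/2, flow_mem⟩ ?_) (le_csSup ⟨3/2, ?_⟩ flow_mem)
    · rintro r ⟨B, h1, h2⟩
      exact flow_ub r B h1 h2
    · rintro r ⟨B, h1, h2⟩
      exact flow_ub r B h1 h2
end
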